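/- Let π be a possibility distribution on ℝⁿ satisfying Assumption 1 whose cuts have the form C(λ_i) = {a ∈ ℝⁿ : a̲(λ_i) ≤ a ≤ ā(λ_i), ‖a − â‖₁ ≤ δ̄(λ_i)} for vectors a̲(λ_i) ≤ â ≤ ā(λ_i) and scalars δ̄(λ_i) ≥ 0, i ∈ Λ. Let ℓ be a positive integer, ε ∈ [0,1), b ∈ ℝ, x ∈ ℝⁿ. Then sup_{P ∈ P_π^ℓ} CVaR_P^ε[ãᵀx] ≤ b holds if and only if there exist w, t ∈ ℝ, reals v_i ≥ 0, γ_i ≥ 0, and nonnegative vectors α_i, β_i, φ_i, ξ_i ∈ ℝ₊ⁿ (i ∈ Λ) such that: w + Σ_{i∈Λ}(λ_i − 1)v_i ≤ (b − t)(1 − ε); w − Σ_{j≤i} v_j ≥ 0 for all i ∈ Λ; w − Σ_{j≤i} v_j + t ≥ ā(λ_i)ᵀα_i − a̲(λ_i)ᵀβ_i + âᵀ(φ_i − ξ_i) + δ̄(λ_i)γ_i for all i ∈ Λ; α_{ij} − β_{ij} + φ_{ij} − ξ_{ij} = x_j for all j ∈ [n], i ∈ Λ; and γ_i − φ_{ij}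 − ξ_{ij} ≥ 0 for all j ∈ [n], i ∈ Λ. -/

import Mathlib

open MeasureTheory Set
open scoped ENNReal

/-- Conditional Value at Risk at level `ε` of the random variable `X` under `P`. -/
noncomputable def cvar {Ω : Type*} [MeasurableSpace Ω] (P : Measure Ω) (ε : ℝ) (X : Ω → ℝ) : ℝ :=
  ⨅ t : ℝ, (t + (1 / (1 - ε)) * ∫ a, max (X a - t) 0 ∂P)

/-- The discrete ambiguity set `P_π^ℓ`. -/
def ambiguitySet (n ℓ : ℕ) (C : ℝ → Set (Fin n → ℝ)) : Set (Measure (Fin n → ℝ)) :=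
  {P | IsProbabilityMeasure P ∧
    ∀ i : Fin (ℓ + 1), ENNReal.ofReal (1 - ((i : ℕ) : ℝ) / ℓ) ≤ P (C (((i : ℕ) : ℝ) / ℓ))}

lemma weakDual {n : ℕ} (lo hi ahat a x α β φ ξ : Fin n → ℝ) (d γ : ℝ)
    (hγ : 0 ≤ γ)
    (hα : ∀ j, 0 ≤ α j) (hβ : ∀ j, 0 ≤ β j) (hφ : ∀ j, 0 ≤ φ j) (hξ : ∀ j, 0 ≤ ξ j)
    (heq : ∀ j, α j - β j + φ j - ξ j = x j)
    (hcap : ∀ j, 0 ≤ γ - φ j - ξ j)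
    (ha : (∀ j, lo j ≤ a j ∧ a j ≤ hi j) ∧ ∑ j, |a j - ahat j| ≤ d) :
    ∑ j, a j * x j ≤
      ∑ j, hi j * α j - ∑ j, lo j * β j + ∑ j, ahat j * (φ j - ξ j) + d * γ := by
  have key : ∀ j, a j * x j ≤
      hi j * α j - lo j * β j + ahat j * (φ j - ξ j) + |a j - ahat j| * γ := by
    intro j
    have h1 : a j * α j ≤ hi j * α j := mul_le_mul_of_nonneg_right (ha.1 j).2 (hα j)
    have h2 : lo j * β j ≤ a j * β j := mul_le_mul_of_nonneg_right (ha.1 j).1 (hβ j)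
    have h3 : (a j - ahat j) * (φ j - ξ j) ≤ |a j - ahat j| * γ := by
      calc (a j - ahat j) * (φ j - ξ j) ≤ |(a j - ahat j) * (φ j - ξ j)| := le_abs_self _
      _ = |a j - ahat j| * |φ j - ξ j| := abs_mul _ _
      _ ≤ |a j - ahat j| * γ := by
          apply mul_le_mul_of_nonneg_left _ (abs_nonneg _)
          rw [abs_le]; constructor <;> nlinarith [hφ j, hξ j, hcap j]
    have expand : a j * x j = a j * α j - a j * β j + ahat j * (φ j - ξ j)
        + (a j - ahat j) * (φ j - ξ j) := by rw [← heq j]; ring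
    linarith [h1, h2, h3]
  calc ∑ j, a j * x j ≤ ∑ j, (hi j * α j - lo j * β j + ahat j * (φ j - ξ j)
        + |a j - ahat j| * γ) := Finset.sum_le_sum (fun j _ => key j)
  _ = ∑ j, hi j * α j - ∑ j, lo j * β j + ∑ j, ahat j * (φ j - ξ j)
        + (∑ j, |a j - ahat j|) * γ := by
      rw [Finset.sum_add_distrib, Finset.sum_add_distrib, Finset.sum_sub_distrib,
        ← Finset.sum_mul]
  _ ≤ _ := by
      have : (∑ j, |a j - ahat j|) * γ ≤ d * γ := mul_le_mul_of_nonneg_right ha.2 hγ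
      linarith


section Knap
open Finset
lemma knap {n : ℕ} (c r : Fin n → ℝ) (hc : ∀ j, 0 ≤ c j) (hr : ∀ j, 0 ≤ r j)
    (d : ℝ) (hd : 0 ≤ d) :
    ∃ (s : Fin n → ℝ) (γ : ℝ), 0 ≤ γ ∧ (∀ j, 0 ≤ s j) ∧ (∀ j, s j ≤ r j) ∧
      (∑ j, s j ≤ d) ∧
      ∑ j, c j * s j = d * γ + ∑ j, r j * max (c j - γ) 0 := by
  classical
  set F : Finset ℝ := insert 0 (Finset.image c Finset.univ) with hF
  have hFne : F.Nonempty := ⟨0, mem_insert_self _ _⟩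
  set G : ℝ → ℝ := fun γ => ∑ j ∈ univ.filter (fun j => γ < c j), r j with hG
  have hFnonneg : ∀ γ ∈ F, (0:ℝ) ≤ γ := by
    intro γ hγ
    rcases mem_insert.1 hγ with h | h
    · simp [h]
    · rcases Finset.mem_image.1 h with ⟨j, _, rfl⟩; exact hc j
  have hFmem : ∀ j, c j ∈ F := fun j =>
    mem_insert_of_mem (Finset.mem_image.2 ⟨j, mem_univ _, rfl⟩)
  set T : Finset ℝ := F.filter (fun γ => G γ ≤ d) with hT
  have hTne : T.Nonempty := by
    refine ⟨F.max' hFne, mem_filter.2 ⟨F.max'_mem hFne, ?_⟩⟩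
    have : univ.filter (fun j => F.max' hFne < c j) = ∅ := by
      apply Finset.filter_false_of_mem
      intro j _
      exact not_lt.2 (F.le_max' _ (hFmem j))
    have hzero : G (F.max' hFne) = 0 := by
      simp only [hG]; rw [this]; exact Finset.sum_empty
    rw [hzero]; exact hd
  set γs : ℝ := T.min' hTne with hγs
  have hγsT : γs ∈ T := T.min'_mem hTne
  have hγsF : γs ∈ F := (mem_filter.1 hγsT).1
  have hγsG : G γs ≤ d := (mem_filter.1 hγsT).2
  have hγs0 : 0 ≤ γs := hFnonneg _ hγsF
  rcases eq_or_lt_of_le hγs0 with h0 | hpos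
  · -- threshold zero
    refine ⟨fun j => if 0 < c j then r j else 0, 0, le_refl _, ?_, ?_, ?_, ?_⟩
    · intro j; dsimp only; split <;> simp [hr j]
    · intro j; dsimp only; split <;> simp [hr j]
    · calc ∑ j, (if 0 < c j then r j else 0)
          = ∑ j ∈ univ.filter (fun j => (0:ℝ) < c j), r j := (Finset.sum_filter _ _).symm
        _ = G 0 := rfl
        _ ≤ d := by rw [← h0] at hγsG; exact hγsG
    · rw [mul_zero, zero_add]
      apply Finset.sum_congr rfl
      intro j _
      by_cases h : 0 < c j
      · simp [h, max_eq_left (le_of_lt h), mul_comm]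
      · have : c j = 0 := le_antisymm (not_lt.1 h) (hc j)
        simp [h, this]
  · -- positive threshold
    set A : Finset (Fin n) := univ.filter (fun j => γs < c j) with hA
    set E : Finset (Fin n) := univ.filter (fun j => c j = γs) with hE
    set R : ℝ := d - G γs with hR
    have hR0 : 0 ≤ R := by simp [hR]; linarith
    set TE : ℝ := ∑ j ∈ E, r j with hTE
    -- claim : R < TE
    have hlt : R < TE := by
      have hne' : (F.filter (fun γ => γ < γs)).Nonempty :=
        ⟨0, mem_filter.2 ⟨mem_insert_self _ _, hpos⟩⟩
      set γ' : ℝ := (F.filter (fun γ => γ < γs)).max' hne' with hγ'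
      have hγ'mem := (F.filter (fun γ => γ < γs)).max'_mem hne'
      have hγ'F : γ' ∈ F := (mem_filter.1 hγ'mem).1
      have hγ'lt : γ' < γs := (mem_filter.1 hγ'mem).2
      have hγ'nT : ¬ (G γ' ≤ d) := by
        intro h
        have : γ' ∈ T := mem_filter.2 ⟨hγ'F, h⟩
        exact absurd (T.min'_le _ this) (not_le.2 hγ'lt)
      have hiff : ∀ j, (γ' < c j) ↔ (γs < c j ∨ c j = γs) := by
        intro j
        constructor
        · intro h
          rcases lt_trichotomy (c j) γs with h1 | h1 | h1
          · exfalso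
            have : c j ∈ F.filter (fun γ => γ < γs) := mem_filter.2 ⟨hFmem j, h1⟩
            exact absurd ((F.filter (fun γ => γ < γs)).le_max' _ this) (not_le.2 h)
          · exact Or.inr h1
          · exact Or.inl h1
        · rintro (h | h)
          · exact lt_trans hγ'lt h
          · rw [h]; exact hγ'lt
      have hdisj : Disjoint (univ.filter (fun j => γs < c j))
          (univ.filter (fun j => c j = γs)) := by
        rw [Finset.disjoint_filter]
        intro j _ h1 h2
        exact absurd h2 (ne_of_gt h1)
      have hsplit : G γ' = G γs + TE := by
        have heqf : univ.filter (fun j => γ' < c j)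
            = univ.filter (fun j => γs < c j ∨ c j = γs) := by
          apply Finset.filter_congr; intro j _; simp [hiff j]
        simp only [hG]
        rw [heqf, Finset.filter_or, Finset.sum_union hdisj]
      have : d < G γ' := not_le.1 hγ'nT
      rw [hsplit] at this
      simp only [hR, hTE]
      linarith
    have hTEpos : 0 < TE := lt_of_le_of_lt hR0 hlt
    -- the solution
    set s : Fin n → ℝ := fun j =>
      if γs < c j then r j else if c j = γs then r j * (R / TE) else 0 with hs
    have hsum_split : ∀ f1 f2 : Fin n → ℝ,
        ∑ j, (if γs < c j then f1 j else if c j = γs then f2 j else 0)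
          = ∑ j ∈ A, f1 j + ∑ j ∈ E, f2 j := by
      intro f1 f2
      rw [hA, hE, Finset.sum_filter, Finset.sum_filter, ← Finset.sum_add_distrib]
      apply Finset.sum_congr rfl
      intro j _
      by_cases h1 : γs < c j
      · have : ¬ (c j = γs) := ne_of_gt h1
        simp [h1, this]
      · by_cases h2 : c j = γs <;> simp [h1, h2]
    have hRdivTE : 0 ≤ R / TE := div_nonneg hR0 (le_of_lt hTEpos)
    refine ⟨s, γs, hγs0, ?_, ?_, ?_, ?_⟩
    · intro j; rw [hs]; dsimp only
      split
      · exact hr j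
      · split
        · exact mul_nonneg (hr j) hRdivTE
        · exact le_refl _
    · intro j; rw [hs]; dsimp only
      split
      · exact le_refl _
      · split
        · have h1 : R / TE ≤ 1 := by
            rw [div_le_one hTEpos]; exact le_of_lt hlt
          nlinarith [hr j]
        · exact hr j
    · have : ∑ j, s j = ∑ j ∈ A, r j + ∑ j ∈ E, (r j * (R / TE)) := hsum_split _ _
      rw [this, ← Finset.sum_mul]
      have hGA : ∑ j ∈ A, r j = G γs := rfl
      rw [hGA, ← hTE, hR]
      field_simp
      linarith
    · have lhs : ∑ j, c j * s j = ∑ j ∈ A, c j * r j + ∑ j ∈ E, c j * (r j * (R / TE)) := by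
        have : ∀ j, c j * s j
            = (if γs < c j then c j * r j else if c j = γs then c j * (r j * (R / TE)) else 0) := by
          intro j; rw [hs]; dsimp only; split
          · rfl
          · split
            · rfl
            · exact mul_zero _
        rw [Finset.sum_congr rfl (fun j _ => this j), hsum_split]
      have hEc : ∑ j ∈ E, c j * (r j * (R / TE)) = γs * R := by
        have : ∀ j ∈ E, c j * (r j * (R / TE)) = γs * (R / TE) * r j := by
          intro j hj
          have : c j = γs := (mem_filter.1 hj).2
          rw [this]; ring
        rw [Finset.sum_congr rfl this, ← Finset.mul_sum, ← hTE]
        field_simp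
      have rhs : ∑ j, r j * max (c j - γs) 0 = ∑ j ∈ A, r j * (c j - γs) := by
        rw [hA, Finset.sum_filter]
        apply Finset.sum_congr rfl
        intro j _
        by_cases h : γs < c j
        · simp [h, max_eq_left (by linarith : (0:ℝ) ≤ c j - γs)]
        · have : c j - γs ≤ 0 := by linarith [not_lt.1 h]
          simp [h, max_eq_right this]
      have expand : ∑ j ∈ A, r j * (c j - γs) = ∑ j ∈ A, r j * c j - γs * G γs := by
        rw [Finset.mul_sum]
        rw [← Finset.sum_sub_distrib]
        apply Finset.sum_congr rfl
        intro j _; ring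
      rw [lhs, hEc, rhs, expand]
      have : ∑ j ∈ A, c j * r j = ∑ j ∈ A, r j * c j :=
        Finset.sum_congr rfl (fun j _ => mul_comm _ _)
      rw [this, hR]
      ring

end Knap

set_option maxHeartbeats 2000000 in
/-- Linear programming reformulation of the CVaR constraint for cuts given by a box
together with an `L₁`-norm (continuous budget) constraint. -/
theorem cvar_constraint_iff_l1 (n ℓ : ℕ) (hn : 1 ≤ n) (hℓ : 1 ≤ ℓ)
    (π : (Fin n → ℝ) → ℝ) (hrange : ∀ a, π a ∈ Icc (0 : ℝ) 1)
    (C : ℝ → Set (Fin n → ℝ))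
    (hcut : ∀ lam : ℝ, 0 < lam → C lam = {a | lam ≤ π a})
    (hsupp : C 0 = closure {a | 0 < π a})
    (ahat : Fin n → ℝ) (hnorm : π ahat = 1)
    (hcont : ContinuousOn π (C 0))
    (hcompact : IsCompact (C 0))
    (hclosed : ∀ lam ∈ Icc (0 : ℝ) 1, IsClosed (C lam))
    (hconvex : ∀ lam ∈ Icc (0 : ℝ) 1, Convex ℝ (C lam))
    (hint : ∀ lam ∈ Ico (0 : ℝ) 1, (interior (C lam)).Nonempty)
    -- the cuts have the box-plus-`L₁`-ball form
    (lo hi : Fin (ℓ + 1) → Fin n → ℝ) (d : Fin (ℓ + 1) → ℝ)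
    (hlo : ∀ i j, lo i j ≤ ahat j) (hhi : ∀ i j, ahat j ≤ hi i j) (hd : ∀ i, 0 ≤ d i)
    (hform : ∀ i : Fin (ℓ + 1),
      C (((i : ℕ) : ℝ) / ℓ) =
        {a | (∀ j, lo i j ≤ a j ∧ a j ≤ hi i j) ∧ ∑ j, |a j - ahat j| ≤ d i})
    (ε : ℝ) (hε : ε ∈ Ico (0 : ℝ) 1) (b : ℝ) (x : Fin n → ℝ) :
    (∀ P ∈ ambiguitySet n ℓ C, cvar P ε (fun a => ∑ j, a j * x j) ≤ b)
    ↔ ∃ (w t : ℝ) (v γ : Fin (ℓ + 1) → ℝ)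
        (α β φ ξ : Fin (ℓ + 1) → Fin n → ℝ),
        (∀ i, 0 ≤ v i) ∧ (∀ i, 0 ≤ γ i) ∧
        (∀ i j, 0 ≤ α i j) ∧ (∀ i j, 0 ≤ β i j) ∧ (∀ i j, 0 ≤ φ i j) ∧
        (∀ i j, 0 ≤ ξ i j) ∧
        w + ∑ i : Fin (ℓ + 1), (((i : ℕ) : ℝ) / ℓ - 1) * v i ≤ (b - t) * (1 - ε) ∧
        (∀ i : Fin (ℓ + 1), 0 ≤ w - ∑ j ∈ Finset.Iic i, v j) ∧
        (∀ i : Fin (ℓ + 1),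
          ∑ j, hi i j * α i j - ∑ j, lo i j * β i j + ∑ j, ahat j * (φ i j - ξ i j)
            + d i * γ i ≤ w - ∑ j ∈ Finset.Iic i, v j + t) ∧
        (∀ i j, α i j - β i j + φ i j - ξ i j = x j) ∧
        (∀ i j, 0 ≤ γ i - φ i j - ξ i j) := by
  classical
  have hℓpos : (0:ℝ) < ℓ := by exact_mod_cast hℓ
  have hεlt : ε < 1 := hε.2
  have hεpos : (0:ℝ) < 1 - ε := by linarith
  set f : (Fin n → ℝ) → ℝ := fun a => ∑ j, a j * x j with hf
  have hfc : Continuous f := by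
    apply continuous_finset_sum
    intro j _
    exact (continuous_apply j).mul continuous_const
  -- the cuts at grid points
  set Ci : Fin (ℓ + 1) → Set (Fin n → ℝ) := fun i => C (((i : ℕ) : ℝ) / ℓ) with hCi
  have hlam_mem : ∀ i : Fin (ℓ + 1), ((i : ℕ) : ℝ) / ℓ ∈ Icc (0:ℝ) 1 := by
    intro i
    have h1 : ((i:ℕ):ℝ) ≤ ℓ := by exact_mod_cast Nat.lt_succ_iff.mp i.isLt
    constructor
    · positivity
    · rw [div_le_one hℓpos]; exact h1
  have hC0 : Ci 0 = C 0 := by norm_num [hCi]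
  have hnest : ∀ i j : Fin (ℓ + 1), i ≤ j → Ci j ⊆ Ci i := by
    intro i j hij
    by_cases h0 : (i:ℕ) = 0
    · by_cases h0' : (j:ℕ) = 0
      · simp [hCi, h0, h0']
      · have hjpos : (0:ℝ) < ((j:ℕ):ℝ) / ℓ := by
          have : 0 < (j:ℕ) := Nat.pos_of_ne_zero h0'
          positivity
        rw [hCi]
        simp only [h0]
        norm_num
        rw [hcut _ hjpos, hsupp]
        intro a ha
        apply subset_closure
        exact lt_of_lt_of_le hjpos ha
    · have hipos : (0:ℝ) < ((i:ℕ):ℝ) / ℓ := by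
        have : 0 < (i:ℕ) := Nat.pos_of_ne_zero h0
        positivity
      have hjpos : (0:ℝ) < ((j:ℕ):ℝ) / ℓ := by
        have hij' : (i:ℕ) ≤ (j:ℕ) := hij
        have : 0 < (j:ℕ) := lt_of_lt_of_le (Nat.pos_of_ne_zero h0) hij'
        positivity
      rw [hCi]
      simp only
      rw [hcut _ hipos, hcut _ hjpos]
      intro a ha
      have : ((i:ℕ):ℝ)/ℓ ≤ ((j:ℕ):ℝ)/ℓ := by
        have hij' : ((i:ℕ):ℝ) ≤ ((j:ℕ):ℝ) := by exact_mod_cast (hij : (i:ℕ) ≤ (j:ℕ))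
        gcongr
      exact le_trans this ha
  have hmeas : ∀ i, MeasurableSet (Ci i) := fun i => (hclosed _ (hlam_mem i)).measurableSet
  obtain ⟨M, hM⟩ := hcompact.exists_bound_of_continuousOn hfc.continuousOn
  have hahat0 : ahat ∈ C 0 := by
    rw [hsupp]; exact subset_closure (by simp [hnorm])
  have hMnn : 0 ≤ M := le_trans (norm_nonneg _) (hM ahat hahat0)
  constructor
  · intro H
    -- knapsack data
    set c : Fin n → ℝ := fun j => |x j| with hcdef
    set r : Fin (ℓ+1) → Fin n → ℝ :=
      fun i j => if 0 ≤ x j then hi i j - ahat j else ahat j - lo i j with hrdef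
    have hrnn : ∀ i j, 0 ≤ r i j := by
      intro i j
      rw [hrdef]; dsimp only; split
      · linarith [hhi i j]
      · linarith [hlo i j]
    have hknap : ∀ i : Fin (ℓ+1), ∃ (s : Fin n → ℝ) (γ : ℝ), 0 ≤ γ ∧ (∀ j, 0 ≤ s j) ∧
        (∀ j, s j ≤ r i j) ∧ (∑ j, s j ≤ d i) ∧
        ∑ j, c j * s j = d i * γ + ∑ j, r i j * max (c j - γ) 0 :=
      fun i => knap c (r i) (fun j => abs_nonneg _) (hrnn i) (d i) (hd i)
    choose s g hg0 hs0 hsr hsd hval using hknap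
    -- the extremal points
    set pt : Fin (ℓ+1) → Fin n → ℝ :=
      fun i j => if 0 ≤ x j then ahat j + s i j else ahat j - s i j with hptdef
    have habs : ∀ i j, |pt i j - ahat j| = s i j := by
      intro i j
      rw [hptdef]; dsimp only
      by_cases hx : 0 ≤ x j
      · rw [if_pos hx]
        have : ahat j + s i j - ahat j = s i j := by ring
        rw [this, abs_of_nonneg (hs0 i j)]
      · rw [if_neg hx]
        have : ahat j - s i j - ahat j = -(s i j) := by ring
        rw [this, abs_neg, abs_of_nonneg (hs0 i j)]
    have hpt_box : ∀ i, (∀ j, lo i j ≤ pt i j ∧ pt i j ≤ hi i j)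
        ∧ ∑ j, |pt i j - ahat j| ≤ d i := by
      intro i
      constructor
      · intro j
        have h0 := hs0 i j
        have h1 := hsr i j
        rw [hrdef] at h1; dsimp only at h1
        rw [hptdef]; dsimp only
        by_cases hx : 0 ≤ x j
        · rw [if_pos hx]; rw [if_pos hx] at h1
          exact ⟨by linarith [hlo i j], by linarith⟩
        · rw [if_neg hx]; rw [if_neg hx] at h1
          exact ⟨by linarith, by linarith [hhi i j]⟩
      · rw [Finset.sum_congr rfl (fun j _ => habs i j)]
        exact hsd i
    have hpt_mem : ∀ i, pt i ∈ Ci i := by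
      intro i
      show pt i ∈ C (((i:ℕ):ℝ)/ℓ)
      rw [hform i]
      exact hpt_box i
    set V : Fin (ℓ+1) → ℝ := fun i => ∑ j, pt i j * x j with hVdef
    -- dual variables
    set αD : Fin (ℓ+1) → Fin n → ℝ :=
      fun i j => if 0 ≤ x j then max (x j - g i) 0 else 0 with hαD
    set βD : Fin (ℓ+1) → Fin n → ℝ :=
      fun i j => if 0 ≤ x j then 0 else max (-x j - g i) 0 with hβD
    set φD : Fin (ℓ+1) → Fin n → ℝ :=
      fun i j => if 0 ≤ x j then min (x j) (g i) else 0 with hφD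
    set ξD : Fin (ℓ+1) → Fin n → ℝ :=
      fun i j => if 0 ≤ x j then 0 else min (-x j) (g i) with hξD
    have hαn : ∀ i j, 0 ≤ αD i j := by
      intro i j; rw [hαD]; dsimp only; split
      · exact le_max_right _ _
      · exact le_refl _
    have hβn : ∀ i j, 0 ≤ βD i j := by
      intro i j; rw [hβD]; dsimp only; split
      · exact le_refl _
      · exact le_max_right _ _
    have hφn : ∀ i j, 0 ≤ φD i j := by
      intro i j; rw [hφD]; dsimp only; split
      · exact le_min (by assumption) (hg0 i)
      · exact le_refl _
    have hξn : ∀ i j, 0 ≤ ξD i j := by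
      intro i j; rw [hξD]; dsimp only; split
      · exact le_refl _
      · exact le_min (by linarith [lt_of_not_ge (by assumption)]) (hg0 i)
    have heqD : ∀ i j, αD i j - βD i j + φD i j - ξD i j = x j := by
      intro i j
      rw [hαD, hβD, hφD, hξD]; dsimp only
      by_cases hx : 0 ≤ x j
      · rw [if_pos hx, if_pos hx, if_pos hx, if_pos hx]
        rcases le_total (x j) (g i) with h | h
        · rw [max_eq_right (by linarith), min_eq_left h]; ring
        · rw [max_eq_left (by linarith), min_eq_right h]; ring
      · rw [if_neg hx, if_neg hx, if_neg hx, if_neg hx]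
        rcases le_total (-x j) (g i) with h | h
        · rw [max_eq_right (by linarith), min_eq_left h]; ring
        · rw [max_eq_left (by linarith), min_eq_right h]; ring
    have hcapD : ∀ i j, 0 ≤ g i - φD i j - ξD i j := by
      intro i j
      rw [hφD, hξD]; dsimp only
      by_cases hx : 0 ≤ x j
      · rw [if_pos hx, if_pos hx]
        have := min_le_right (x j) (g i); linarith
      · rw [if_neg hx, if_neg hx]
        have := min_le_right (-x j) (g i); linarith
    -- dual value equals V
    have hdv : ∀ i, ∑ j, hi i j * αD i j - ∑ j, lo i j * βD i j
        + ∑ j, ahat j * (φD i j - ξD i j) + d i * g i = V i := by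
      intro i
      have hcomb : ∑ j, hi i j * αD i j - ∑ j, lo i j * βD i j
          + ∑ j, ahat j * (φD i j - ξD i j)
          = ∑ j, (ahat j * x j + r i j * max (c j - g i) 0) := by
        rw [← Finset.sum_sub_distrib, ← Finset.sum_add_distrib]
        apply Finset.sum_congr rfl
        intro j _
        rw [hαD, hβD, hφD, hξD, hrdef, hcdef]; dsimp only
        by_cases hx : 0 ≤ x j
        · rw [if_pos hx, if_pos hx, if_pos hx, if_pos hx, if_pos hx, abs_of_nonneg hx]
          rcases le_total (x j) (g i) with h | h
          · rw [max_eq_right (by linarith), min_eq_left h]; ring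
          · rw [max_eq_left (by linarith), min_eq_right h]; ring
        · rw [if_neg hx, if_neg hx, if_neg hx, if_neg hx, if_neg hx,
            abs_of_neg (lt_of_not_ge hx)]
          rcases le_total (-x j) (g i) with h | h
          · rw [max_eq_right (by linarith), min_eq_left h]; ring
          · rw [max_eq_left (by linarith), min_eq_right h]; ring
      have hVval : V i = ∑ j, ahat j * x j + ∑ j, c j * s i j := by
        rw [hVdef]; dsimp only
        rw [← Finset.sum_add_distrib]
        apply Finset.sum_congr rfl
        intro j _
        rw [hptdef, hcdef]; dsimp only
        by_cases hx : 0 ≤ x j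
        · rw [if_pos hx, abs_of_nonneg hx]; ring
        · rw [if_neg hx, abs_of_neg (lt_of_not_ge hx)]; ring
      rw [hcomb, Finset.sum_add_distrib, hVval, hval i]
      ring
    -- antitonicity of V
    have hVle : ∀ i k : Fin (ℓ+1), i ≤ k → V k ≤ V i := by
      intro i k hik
      have hmem : pt k ∈ Ci i := hnest i k hik (hpt_mem k)
      have hmem' : (∀ j, lo i j ≤ pt k j ∧ pt k j ≤ hi i j)
          ∧ ∑ j, |pt k j - ahat j| ≤ d i := by
        have h' : pt k ∈ C (((i:ℕ):ℝ)/ℓ) := hmem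
        rwa [hform i] at h'
      have hwd := weakDual (lo i) (hi i) ahat (pt k) x (αD i) (βD i) (φD i) (ξD i) (d i) (g i)
        (hg0 i) (hαn i) (hβn i) (hφn i) (hξn i) (heqD i) (hcapD i) hmem'
      rw [hdv i] at hwd
      exact hwd
    -- index embedding
    set ι : ℕ → Fin (ℓ+1) := fun m => ⟨min m ℓ, by omega⟩ with hι
    have hιval : ∀ m, m ≤ ℓ → ((ι m : ℕ)) = m := by
      intro m hm; rw [hι]; simp [Nat.min_eq_left hm]
    have hιid : ∀ i : Fin (ℓ+1), ι (i : ℕ) = i := by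
      intro i
      apply Fin.ext
      exact hιval _ (Nat.lt_succ_iff.mp i.isLt)
    -- the worst-case measure
    set Pm : Measure (Fin n → ℝ) :=
      ((ℓ:ℝ≥0∞))⁻¹ • ∑ m ∈ Finset.range ℓ, Measure.dirac (pt (ι m)) with hPmdef
    have hℓ0 : (ℓ:ℝ≥0∞) ≠ 0 := by
      simp only [ne_eq, Nat.cast_eq_zero]
      omega
    have hℓtop : (ℓ:ℝ≥0∞) ≠ ⊤ := ENNReal.natCast_ne_top ℓ
    have happly : ∀ (S : Set (Fin n → ℝ)),
        Pm S = (ℓ:ℝ≥0∞)⁻¹ * ∑ m ∈ Finset.range ℓ, (Measure.dirac (pt (ι m))) S := by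
      intro S
      rw [hPmdef, Measure.smul_apply, smul_eq_mul]
      congr 1
      induction (Finset.range ℓ) using Finset.induction_on with
      | empty => simp
      | insert hnotmem => simp_all [Measure.add_apply]
    have hprob : IsProbabilityMeasure Pm := by
      constructor
      rw [happly]
      have : ∀ m ∈ Finset.range ℓ, (Measure.dirac (pt (ι m))) Set.univ = 1 := by
        intro m _; simp
      rw [Finset.sum_congr rfl this, Finset.sum_const, Finset.card_range, nsmul_eq_mul, mul_one]
      exact ENNReal.inv_mul_cancel hℓ0 hℓtop
    have hPmem : Pm ∈ ambiguitySet n ℓ C := by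
      refine ⟨hprob, ?_⟩
      intro k
      have hkℓ : (k:ℕ) ≤ ℓ := Nat.lt_succ_iff.mp k.isLt
      have hcount : ((ℓ - (k:ℕ) : ℕ) : ℝ≥0∞)
          ≤ ∑ m ∈ Finset.range ℓ, (Measure.dirac (pt (ι m))) (Ci k) := by
        have hsub : Finset.Ico (k:ℕ) ℓ ⊆ Finset.range ℓ := by
          intro m hm
          rw [Finset.mem_range]
          exact (Finset.mem_Ico.1 hm).2
        have hone : ∀ m ∈ Finset.Ico (k:ℕ) ℓ, (Measure.dirac (pt (ι m))) (Ci k) = 1 := by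
          intro m hm
          obtain ⟨hm1, hm2⟩ := Finset.mem_Ico.1 hm
          have hklei : k ≤ ι m := by
            rw [Fin.le_def, hιval m (le_of_lt hm2)]
            exact hm1
          have hmemk : pt (ι m) ∈ Ci k := hnest k (ι m) hklei (hpt_mem (ι m))
          rw [Measure.dirac_apply' _ (hmeas k), Set.indicator_of_mem hmemk]
          rfl
        calc ((ℓ - (k:ℕ) : ℕ) : ℝ≥0∞) = ∑ m ∈ Finset.Ico (k:ℕ) ℓ, 1 := by
              rw [Finset.sum_const, Nat.card_Ico, nsmul_eq_mul, mul_one]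
        _ = ∑ m ∈ Finset.Ico (k:ℕ) ℓ, (Measure.dirac (pt (ι m))) (Ci k) :=
              (Finset.sum_congr rfl hone).symm
        _ ≤ _ := Finset.sum_le_sum_of_subset hsub
      have hofreal : ENNReal.ofReal (1 - ((k:ℕ):ℝ)/ℓ)
          = (ℓ:ℝ≥0∞)⁻¹ * ((ℓ - (k:ℕ) : ℕ) : ℝ≥0∞) := by
        have he : 1 - ((k:ℕ):ℝ)/ℓ = ((ℓ - (k:ℕ):ℕ):ℝ) / (ℓ:ℝ) := by
          rw [Nat.cast_sub hkℓ]
          field_simp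
        rw [he, ENNReal.ofReal_div_of_pos hℓpos, ENNReal.ofReal_natCast,
          ENNReal.ofReal_natCast, div_eq_mul_inv, mul_comm]
      calc ENNReal.ofReal (1 - ((k:ℕ):ℝ)/ℓ)
          = (ℓ:ℝ≥0∞)⁻¹ * ((ℓ - (k:ℕ) : ℕ) : ℝ≥0∞) := hofreal
      _ ≤ (ℓ:ℝ≥0∞)⁻¹ * ∑ m ∈ Finset.range ℓ, (Measure.dirac (pt (ι m))) (Ci k) :=
            mul_le_mul_right hcount _
      _ = Pm (Ci k) := (happly _).symm
    -- the integral under Pm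
    have hfpt : ∀ i, f (pt i) = V i := fun i => rfl
    have hintPm : ∀ t : ℝ, ∫ a, max (f a - t) 0 ∂Pm
        = (ℓ:ℝ)⁻¹ * ∑ m ∈ Finset.range ℓ, max (V (ι m) - t) 0 := by
      intro t
      have hcont2 : Continuous (fun a => max (f a - t) 0) :=
        (hfc.sub continuous_const).max continuous_const
      have hintd : ∀ (y : Fin n → ℝ),
          Integrable (fun a => max (f a - t) 0) (Measure.dirac y) := by
        intro y
        refine Integrable.mono' (integrable_const ‖max (f y - t) 0‖)
          hcont2.aestronglyMeasurable ?_
        rw [MeasureTheory.ae_dirac_iff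
          ((isClosed_le hcont2.norm continuous_const).measurableSet)]
      rw [hPmdef, integral_smul_measure, integral_finset_sum_measure (fun m _ => hintd _)]
      have : ∀ m ∈ Finset.range ℓ,
          ∫ a, max (f a - t) 0 ∂(Measure.dirac (pt (ι m))) = max (V (ι m) - t) 0 := by
        intro m _
        rw [integral_dirac]
      rw [Finset.sum_congr rfl this, ENNReal.toReal_inv, ENNReal.toReal_natCast, smul_eq_mul]
    -- the piecewise-linear objective
    set q : ℝ → ℝ := fun t =>
      t + (1/(1-ε)) * ((ℓ:ℝ)⁻¹ * ∑ m ∈ Finset.range ℓ, max (V (ι m) - t) 0) with hqdef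
    have hqcont : Continuous q := by
      apply continuous_id.add
      apply continuous_const.mul
      apply continuous_const.mul
      apply continuous_finset_sum
      intro m _
      exact (continuous_const.sub continuous_id).max continuous_const
    have hcvarq : cvar Pm ε f = ⨅ t : ℝ, q t := by
      unfold cvar
      congr 1
      funext t
      rw [hintPm t]
    set U : ℝ := V (ι 0) with hU
    set u : ℝ := V (ι (ℓ-1)) with hu
    have hιmono : ∀ m1 m2 : ℕ, m1 ≤ m2 → ι m1 ≤ ι m2 := by
      intro m1 m2 h
      rw [Fin.le_def, hι]
      simp only
      omega
    have hVmbound : ∀ m ∈ Finset.range ℓ, u ≤ V (ι m) ∧ V (ι m) ≤ U := by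
      intro m hm
      have hm' := Finset.mem_range.1 hm
      constructor
      · exact hVle (ι m) (ι (ℓ-1)) (hιmono m (ℓ-1) (by omega))
      · exact hVle (ι 0) (ι m) (hιmono 0 m (by omega))
    have huU : u ≤ U := by
      have := hVmbound 0 (Finset.mem_range.2 (by omega))
      exact le_trans this.1 this.2
    have hq_right : ∀ t, U ≤ t → q t = t := by
      intro t ht
      rw [hqdef]; dsimp only
      have : ∀ m ∈ Finset.range ℓ, max (V (ι m) - t) 0 = 0 := by
        intro m hm
        have := (hVmbound m hm).2
        exact max_eq_right (by linarith)
      rw [Finset.sum_congr rfl this, Finset.sum_const, smul_zero, mul_zero, mul_zero, add_zero]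
    have hq_left : ∀ t t', t ≤ t' → t' ≤ u →  q t' ≤ q t := by
      intro t t' htt' ht'
      have hval' : ∀ tt, tt ≤ u → q tt = tt * (1 - 1/(1-ε))
          + (1/(1-ε)) * ((ℓ:ℝ)⁻¹ * ∑ m ∈ Finset.range ℓ, V (ι m)) := by
        intro tt htt
        rw [hqdef]; dsimp only
        have : ∀ m ∈ Finset.range ℓ, max (V (ι m) - tt) 0 = V (ι m) - tt := by
          intro m hm
          have := (hVmbound m hm).1
          exact max_eq_left (by linarith)
        rw [Finset.sum_congr rfl this, Finset.sum_sub_distrib, Finset.sum_const,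
          Finset.card_range, nsmul_eq_mul]
        have hc1 : (ℓ:ℝ)⁻¹ * ((ℓ:ℝ) * tt) = tt := by
          field_simp
        rw [mul_sub, hc1]
        ring
      rw [hval' t (le_trans htt' ht'), hval' t' ht']
      have hge1 : (1:ℝ) ≤ 1/(1-ε) := by
        rw [le_div_iff₀ hεpos]
        have := hε.1
        linarith
      nlinarith [htt']
    obtain ⟨t0, ht0mem, ht0min⟩ := isCompact_Icc.exists_isMinOn (α := ℝ)
      (Set.nonempty_Icc.2 huU) hqcont.continuousOn
    rw [isMinOn_iff] at ht0min
    have hglob : ∀ t, q t0 ≤ q t := by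
      intro t
      rcases le_total t u with h | h
      · calc q t0 ≤ q u := ht0min u (Set.mem_Icc.2 ⟨le_refl u, huU⟩)
        _ ≤ q t := hq_left t u h (le_refl u)
      · rcases le_total t U with h2 | h2
        · exact ht0min t (Set.mem_Icc.2 ⟨h, h2⟩)
        · calc q t0 ≤ q U := ht0min U (Set.mem_Icc.2 ⟨huU, le_refl U⟩)
          _ = U := hq_right U (le_refl U)
          _ ≤ t := h2
          _ = q t := (hq_right t h2).symm
    have hqb : q t0 ≤ b := by
      have h1 : q t0 ≤ cvar Pm ε f := by
        rw [hcvarq]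
        exact le_ciInf hglob
      exact le_trans h1 (H Pm hPmem)
    -- assemble the dual solution
    set N : Fin (ℓ+1) → ℝ := fun i => max (V i - t0) 0 with hNdef
    have hNanti : ∀ i k : Fin (ℓ+1), i ≤ k → N k ≤ N i := by
      intro i k hik
      rw [hNdef]; dsimp only
      exact max_le_max (by linarith [hVle i k hik]) (le_refl 0)
    have hNnn : ∀ i, 0 ≤ N i := fun i => le_max_right _ _
    set vD : Fin (ℓ+1) → ℝ :=
      fun i => if (i:ℕ) = 0 then 0 else N (ι ((i:ℕ)-1)) - N i with hvDdef
    have hvnn : ∀ i, 0 ≤ vD i := by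
      intro i
      rw [hvDdef]; dsimp only
      split
      · exact le_refl _
      · rename_i h
        have hile : (i:ℕ) ≤ ℓ := Nat.lt_succ_iff.mp i.isLt
        have : ι ((i:ℕ)-1) ≤ i := by
          rw [Fin.le_def, hιval _ (by omega)]
          omega
        linarith [hNanti (ι ((i:ℕ)-1)) i this]
    -- telescoping
    have htel : ∀ kk, kk ≤ ℓ → ∑ m ∈ Finset.range (kk+1), vD (ι m) = N (ι 0) - N (ι kk) := by
      intro kk
      induction kk with
      | zero =>
        intro _
        rw [Finset.sum_range_one, hvDdef]
        simp [hιval 0 (by omega)]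
      | succ kk ih =>
        intro hkk
        rw [Finset.sum_range_succ, ih (by omega)]
        have h1 : ((ι (kk+1) : ℕ)) = kk + 1 := hιval _ hkk
        have h2 : vD (ι (kk+1)) = N (ι kk) - N (ι (kk+1)) := by
          have hrfl : vD (ι (kk+1)) = if ((ι (kk+1) : ℕ)) = 0 then 0
              else N (ι (((ι (kk+1)) : ℕ) - 1)) - N (ι (kk+1)) := rfl
          rw [hrfl, h1]
          simp only [Nat.add_sub_cancel]
          rw [if_neg (by omega)]
        rw [h2]
        ring
    have hS : ∀ i : Fin (ℓ+1), ∑ j ∈ Finset.Iic i, vD j = N 0 - N i := by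
      intro i
      have hile : (i:ℕ) ≤ ℓ := Nat.lt_succ_iff.mp i.isLt
      have step1 : ∑ j ∈ Finset.Iic i, vD j
          = ∑ j : Fin (ℓ+1), (if j ∈ Finset.Iic i then vD j else 0) := by
        rw [Finset.sum_ite_mem, Finset.univ_inter]
      have step2 : ∑ j : Fin (ℓ+1), (if j ∈ Finset.Iic i then vD j else 0)
          = ∑ m ∈ Finset.range (ℓ+1), (if m ≤ (i:ℕ) then vD (ι m) else 0) := by
        rw [← Fin.sum_univ_eq_sum_range (fun m => if m ≤ (i:ℕ) then vD (ι m) else 0) (ℓ+1)]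
        apply Finset.sum_congr rfl
        intro j _
        rw [hιid j]
        simp only [Finset.mem_Iic, Fin.le_def]
      have step3 : ∑ m ∈ Finset.range (ℓ+1), (if m ≤ (i:ℕ) then vD (ι m) else 0)
          = ∑ m ∈ Finset.range ((i:ℕ)+1), vD (ι m) := by
        rw [← Finset.sum_filter]
        apply Finset.sum_congr _ (fun m _ => rfl)
        ext m
        simp only [Finset.mem_filter, Finset.mem_range]
        omega
      rw [step1, step2, step3, htel (i:ℕ) hile, hιid i]
      congr 2
    -- Abel-type summation identity
    have hAbel : ∑ i : Fin (ℓ+1), (1 - ((i:ℕ):ℝ)/ℓ) * vD i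
        = N 0 - (ℓ:ℝ)⁻¹ * ∑ m ∈ Finset.range ℓ, N (ι m) := by
      have stepA : ∀ i : Fin (ℓ+1), (1 - ((i:ℕ):ℝ)/ℓ) * vD i
          = (ℓ:ℝ)⁻¹ * ∑ m ∈ Finset.range ℓ, (if (i:ℕ) ≤ m then vD i else 0) := by
        intro i
        have hile : (i:ℕ) ≤ ℓ := Nat.lt_succ_iff.mp i.isLt
        have hfilter : Finset.filter (fun m => (i:ℕ) ≤ m) (Finset.range ℓ)
            = Finset.Ico (i:ℕ) ℓ := by
          ext m
          simp only [Finset.mem_filter, Finset.mem_range, Finset.mem_Ico]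
          omega
        rw [← Finset.sum_filter, hfilter, Finset.sum_const, Nat.card_Ico, nsmul_eq_mul]
        have hcast : ((ℓ - (i:ℕ) : ℕ) : ℝ) = (ℓ:ℝ) - ((i:ℕ):ℝ) := by
          rw [Nat.cast_sub hile]
        rw [hcast]
        field_simp
      rw [Finset.sum_congr rfl (fun i _ => stepA i), ← Finset.mul_sum, Finset.sum_comm]
      have stepC : ∀ m ∈ Finset.range ℓ,
          ∑ i : Fin (ℓ+1), (if (i:ℕ) ≤ m then vD i else 0) = N 0 - N (ι m) := by
        intro m hm
        have hmlt := Finset.mem_range.1 hm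
        have hcond : ∀ i : Fin (ℓ+1), ((i:ℕ) ≤ m) ↔ (i ∈ Finset.Iic (ι m)) := by
          intro i
          rw [Finset.mem_Iic, Fin.le_def, hιval m (le_of_lt hmlt)]
        have : ∀ i : Fin (ℓ+1), (if (i:ℕ) ≤ m then vD i else 0)
            = (if i ∈ Finset.Iic (ι m) then vD i else 0) := by
          intro i
          by_cases h : (i:ℕ) ≤ m
          · rw [if_pos h, if_pos ((hcond i).1 h)]
          · rw [if_neg h, if_neg (fun hc => h ((hcond i).2 hc))]
        rw [Finset.sum_congr rfl (fun i _ => this i), Finset.sum_ite_mem,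
          Finset.univ_inter, hS (ι m)]
      rw [Finset.sum_congr rfl stepC, Finset.sum_sub_distrib, Finset.sum_const,
        Finset.card_range, nsmul_eq_mul]
      have hc1 : (ℓ:ℝ)⁻¹ * ((ℓ:ℝ) * N 0) = N 0 := by field_simp
      rw [mul_sub, hc1]
    -- final assembly
    refine ⟨N 0, t0, vD, g, αD, βD, φD, ξD, hvnn, hg0, hαn, hβn, hφn, hξn, ?_, ?_, ?_,
      heqD, hcapD⟩
    · -- budget constraint
      have hsplit : ∑ i : Fin (ℓ+1), (((i:ℕ):ℝ)/ℓ - 1) * vD i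
          = -(∑ i : Fin (ℓ+1), (1 - ((i:ℕ):ℝ)/ℓ) * vD i) := by
        rw [← Finset.sum_neg_distrib]
        exact Finset.sum_congr rfl (fun i _ => by ring)
      rw [hsplit, hAbel]
      have hNeq : ∑ m ∈ Finset.range ℓ, N (ι m)
          = ∑ m ∈ Finset.range ℓ, max (V (ι m) - t0) 0 := rfl
      have hqb' : t0 + (1/(1-ε)) * ((ℓ:ℝ)⁻¹ * ∑ m ∈ Finset.range ℓ, max (V (ι m) - t0) 0)
          ≤ b := hqb
      have h2 : (1/(1-ε)) * ((ℓ:ℝ)⁻¹ * ∑ m ∈ Finset.range ℓ, max (V (ι m) - t0) 0)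
          ≤ b - t0 := by linarith
      have h3 : (1 - ε) * ((1/(1-ε)) * ((ℓ:ℝ)⁻¹ * ∑ m ∈ Finset.range ℓ, max (V (ι m) - t0) 0))
          = (ℓ:ℝ)⁻¹ * ∑ m ∈ Finset.range ℓ, max (V (ι m) - t0) 0 := by
        rw [← mul_assoc]
        have hone : (1 - ε) * (1/(1-ε)) = 1 := by field_simp
        rw [hone, one_mul]
      have h4 := mul_le_mul_of_nonneg_left h2 (le_of_lt hεpos)
      rw [h3] at h4
      rw [hNeq]
      nlinarith [h4]
    · intro i
      rw [hS i]
      have := hNnn i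
      linarith
    · intro i
      rw [hS i, hdv i]
      have hle1 : V i - t0 ≤ N i := le_max_left _ _
      linarith
  · rintro ⟨w, t, v, γ, α, β, φ, ξ, hv, hγ, hα, hβ, hφ, hξ, h1, h2, h3, h4, h5⟩
    intro P hP
    obtain ⟨hPprob, hPineq⟩ := hP
    have hP0 : P (Ci 0) = 1 := by
      have e0 : (((0 : Fin (ℓ+1)) : ℕ) : ℝ) / ℓ = 0 := by norm_num
      have h := hPineq 0
      rw [e0] at h
      simp only [sub_zero, ENNReal.ofReal_one] at h
      exact le_antisymm prob_le_one (by rw [hCi]; simpa [e0] using h)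
    have hcompl : P ((Ci 0)ᶜ) = 0 := by
      rw [measure_compl (hmeas 0) (measure_ne_top P _), hP0, measure_univ, tsub_self]
    have haeC : ∀ᵐ a ∂P, a ∈ Ci 0 := by
      rw [MeasureTheory.ae_iff]
      convert hcompl using 2
      rfl
    have hfm : AEStronglyMeasurable f P := hfc.aestronglyMeasurable
    have hfint : Integrable f P := by
      apply Integrable.mono' (integrable_const M) hfm
      filter_upwards [haeC] with a ha
      exact hM a (hC0 ▸ ha)
    have hmaxint : ∀ s : ℝ, Integrable (fun a => max (f a - s) 0) P := by
      intro s
      apply Integrable.mono' (integrable_const (M + |s|))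
        (((hfc.sub continuous_const).max continuous_const).aestronglyMeasurable)
      filter_upwards [haeC] with a ha
      have hb : ‖f a‖ ≤ M := hM a (hC0 ▸ ha)
      rw [Real.norm_eq_abs] at hb ⊢
      rw [abs_of_nonneg (le_max_right _ _)]
      apply max_le
      · have hb1 := abs_le.1 hb
        have hs1 : -s ≤ |s| := by
          have := neg_abs_le s; linarith
        show f a - s ≤ M + |s|
        linarith [hb1.2]
      · positivity
    have hkey0 : ∀ s : ℝ, ∫ a, (f a - s) ∂P = (∫ a, f a ∂P) - s := by
      intro s
      rw [integral_sub hfint (integrable_const s), integral_const, probReal_univ]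
      simp
    have hlb : ∀ s : ℝ, (∫ a, f a ∂P) ≤ s + (1/(1-ε)) * ∫ a, max (f a - s) 0 ∂P := by
      intro s
      have hi1 : ∫ a, (f a - s) ∂P ≤ ∫ a, max (f a - s) 0 ∂P :=
        integral_mono (hfint.sub (integrable_const s)) (hmaxint s) (fun a => le_max_left _ _)
      have hi2 : 0 ≤ ∫ a, max (f a - s) 0 ∂P := integral_nonneg (fun a => le_max_right _ _)
      have hi3 : (1:ℝ) ≤ 1/(1-ε) := by
        rw [le_div_iff₀ hεpos]
        have := hε.1
        linarith
      have hi4 : ∫ a, max (f a - s) 0 ∂P ≤ (1/(1-ε)) * ∫ a, max (f a - s) 0 ∂P := by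
        nlinarith
      rw [hkey0] at hi1
      linarith
    have hbdd : BddBelow (Set.range (fun s : ℝ => s + (1/(1-ε)) * ∫ a, max (f a - s) 0 ∂P)) := by
      refine ⟨∫ a, f a ∂P, ?_⟩
      rintro y ⟨s, rfl⟩
      exact hlb s
    have hle : cvar P ε f ≤ t + (1/(1-ε)) * ∫ a, max (f a - t) 0 ∂P := ciInf_le hbdd t
    have hpt : ∀ a ∈ Ci 0, max (f a - t) 0
        ≤ w - ∑ i, v i * (Ci i).indicator (fun _ => (1:ℝ)) a := by
      intro a ha
      set Sk := Finset.univ.filter (fun i : Fin (ℓ+1) => a ∈ Ci i) with hSk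
      have hne : Sk.Nonempty := ⟨0, Finset.mem_filter.2 ⟨Finset.mem_univ _, ha⟩⟩
      set k := Sk.max' hne with hk
      have hak : a ∈ Ci k := (Finset.mem_filter.1 (Sk.max'_mem hne)).2
      have hmemiff : ∀ i, a ∈ Ci i ↔ i ≤ k := by
        intro i
        constructor
        · intro h; exact Sk.le_max' i (Finset.mem_filter.2 ⟨Finset.mem_univ _, h⟩)
        · intro h; exact hnest i k h hak
      have hsum : ∑ i, v i * (Ci i).indicator (fun _ => (1:ℝ)) a = ∑ i ∈ Finset.Iic k, v i := by
        have hpw : ∀ i : Fin (ℓ+1), v i * (Ci i).indicator (fun _ => (1:ℝ)) a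
            = if i ∈ Finset.Iic k then v i else 0 := by
          intro i
          by_cases h : i ≤ k
          · rw [if_pos (Finset.mem_Iic.2 h), Set.indicator_of_mem ((hmemiff i).2 h)]
            ring
          · rw [if_neg (fun hc => h (Finset.mem_Iic.1 hc)),
              Set.indicator_of_notMem (fun hc => h ((hmemiff i).1 hc))]
            ring
        rw [Finset.sum_congr rfl (fun i _ => hpw i), Finset.sum_ite_mem, Finset.univ_inter]
      rw [hsum]
      apply max_le
      · have hwd := weakDual (lo k) (hi k) ahat a x (α k) (β k) (φ k) (ξ k) (d k) (γ k)
          (hγ k) (fun j => hα k j) (fun j => hβ k j) (fun j => hφ k j) (fun j => hξ k j)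
          (fun j => h4 k j) (fun j => h5 k j)
          (by
            have hak' : a ∈ C (((k:ℕ):ℝ)/ℓ) := hak
            rwa [hform k] at hak')
        have h3k := h3 k
        simp only [hf]
        linarith
      · exact h2 k
    have hind_int : ∀ i, Integrable (fun a => v i * (Ci i).indicator (fun _ => (1:ℝ)) a) P :=
      fun i => (((integrable_const (1:ℝ)).indicator (hmeas i)).const_mul (v i))
    have hIbound : ∫ a, max (f a - t) 0 ∂P ≤ w - ∑ i, v i * (P (Ci i)).toReal := by
      have step1 : ∫ a, max (f a - t) 0 ∂P
          ≤ ∫ a, (w - ∑ i, v i * (Ci i).indicator (fun _ => (1:ℝ)) a) ∂P := by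
        apply integral_mono_ae (hmaxint t)
          ((integrable_const w).sub (integrable_finset_sum _ (fun i _ => hind_int i)))
        filter_upwards [haeC] with a ha using hpt a ha
      have step2 : ∫ a, (w - ∑ i, v i * (Ci i).indicator (fun _ => (1:ℝ)) a) ∂P
          = w - ∑ i, v i * (P (Ci i)).toReal := by
        rw [integral_sub (integrable_const w) (integrable_finset_sum _ (fun i _ => hind_int i)),
          integral_const, probReal_univ, integral_finset_sum _ (fun i _ => hind_int i)]
        simp only [ENNReal.toReal_one, smul_eq_mul, one_mul]
        congr 1
        apply Finset.sum_congr rfl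
        intro i _
        rw [MeasureTheory.integral_const_mul]
        congr 1
        exact MeasureTheory.integral_indicator_one (hmeas i)
      linarith [step1, step2.le, step2.ge]
    have htoReal : ∀ i : Fin (ℓ+1), 1 - ((i:ℕ):ℝ)/ℓ ≤ (P (Ci i)).toReal := by
      intro i
      have hmono := ENNReal.toReal_mono (measure_ne_top P _) (hPineq i)
      rwa [ENNReal.toReal_ofReal (by linarith [(hlam_mem i).2])] at hmono
    have hsum_le : ∑ i, v i * (1 - ((i:ℕ):ℝ)/ℓ) ≤ ∑ i, v i * (P (Ci i)).toReal :=
      Finset.sum_le_sum (fun i _ => mul_le_mul_of_nonneg_left (htoReal i) (hv i))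
    have hlam_sum : ∑ i : Fin (ℓ+1), (((i:ℕ):ℝ)/ℓ - 1) * v i
        = -(∑ i, v i * (1 - ((i:ℕ):ℝ)/ℓ)) := by
      rw [← Finset.sum_neg_distrib]
      exact Finset.sum_congr rfl (fun i _ => by ring)
    have hfinal : ∫ a, max (f a - t) 0 ∂P ≤ (b - t) * (1 - ε) := by
      rw [hlam_sum] at h1
      linarith
    have hdiv : (1/(1-ε)) * ∫ a, max (f a - t) 0 ∂P ≤ b - t := by
      rw [one_div, inv_mul_le_iff₀ hεpos]
      calc ∫ a, max (f a - t) 0 ∂P ≤ (b - t) * (1 - ε) := hfinal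
      _ = (1 - ε) * (b - t) := mul_comm _ _
    calc cvar P ε f ≤ t + (1/(1-ε)) * ∫ a, max (f a - t) 0 ∂P := hle
    _ ≤ b := by linarith
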